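/- Let k be a field, n ∈ ℕ, and 0 ≤ k ≤ n. In k[B_{n+1}], g_{n,k} = shift_{n−k}(ω_{k+1}) · S_{n−k,k}, where shift_i : k[B_m] → k[B_{m+i}] is induced by c_j ↦ c_{j+i}, ω_{m} = (c_{m−1})(c_{m−2}c_{m−1})⋯(c_1⋯c_{m−1}) ∈ B_m (with ω_1 = 1), and S_{n−k,k} = Σ_{π ∈ S_{n−k,k}} c_{π^{-1}} is the sum over (n−k)-shuffles of S_n of the Matsumoto lifts of their inverses. -/

import Mathlib

namespace Stmt

/-- The adjacent transposition `s_{i+1} = (i, i+1)` (0-based) in the symmetric group on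
`Fin m`; indices out of range give the identity. -/
def sNat (m i : ℕ) : Equiv.Perm (Fin m) :=
  if h : i + 1 < m then Equiv.swap ⟨i, by omega⟩ ⟨i + 1, h⟩ else 1

/-- The permutation represented by a word in the adjacent transpositions. -/
def toPerm (m : ℕ) (l : List ℕ) : Equiv.Perm (Fin m) := (l.map (sNat m)).prod

/-- `l` is a reduced decomposition of `π`: it represents `π` and has minimal length among
all words representing `π`. -/
def IsReduced (m : ℕ) (l : List ℕ) (π : Equiv.Perm (Fin m)) : Prop :=
  toPerm m l = π ∧ ∀ l' : List ℕ, toPerm m l' = π → l.length ≤ l'.length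

end Stmt
namespace Stmt

/-- The braid relations on the generators `c_1, …, c_N` (0-based: `Fin N`) of the braid
group `B_{N+1}`. -/
def braidRels (N : ℕ) : Set (FreeGroup (Fin N)) :=
  { r | ∃ i j : Fin N,
      ((i : ℕ) + 1 = (j : ℕ) ∧
        r = FreeGroup.of i * FreeGroup.of j * FreeGroup.of i *
            (FreeGroup.of j * FreeGroup.of i * FreeGroup.of j)⁻¹) ∨
      ((i : ℕ) + 2 ≤ (j : ℕ) ∧
        r = FreeGroup.of i * FreeGroup.of j * (FreeGroup.of j * FreeGroup.of i)⁻¹) }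

/-- The braid group `B_{N+1}`, with `N` generators. -/
abbrev Braid (N : ℕ) := PresentedGroup (braidRels N)

/-- The generator `c_{i+1}` (0-based index `i`) of `B_{N+1}`; out-of-range indices give `1`. -/
def bgen (N : ℕ) (i : ℕ) : Braid N :=
  if h : i < N then PresentedGroup.of (⟨i, h⟩ : Fin N) else 1

/-- The braid group element represented by a word in the generators. -/
def bword (N : ℕ) (l : List ℕ) : Braid N := (l.map (bgen N)).prod

end Stmt
namespace Stmt

/-- Membership in `S̃_{n,k} ⊆ S_{n+1}` (0-based positions): `π(1) < ⋯ < π(n−k)`,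
`π(n−k+1) = n+1`, `π(n−k+2) > ⋯ > π(n+1)`. -/
def StildeP (n k : ℕ) (π : Equiv.Perm (Fin (n + 1))) : Prop :=
  (∀ a b : Fin (n + 1), a < b → (b : ℕ) < n - k → π a < π b) ∧
  π ⟨n - k, by omega⟩ = Fin.last n ∧
  (∀ a b : Fin (n + 1), n - k < (a : ℕ) → a < b → π b < π a)

end Stmt
namespace Stmt

theorem braid_mk_rel {N : ℕ} {a b : FreeGroup (Fin N)}
    (h : a * b⁻¹ ∈ braidRels N) :
    (QuotientGroup.mk a : Braid N) = QuotientGroup.mk b := by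
  have h1 : (QuotientGroup.mk (a * b⁻¹) : Braid N) = 1 :=
    (QuotientGroup.eq_one_iff _).mpr (Subgroup.subset_normalClosure h)
  have h2 : (QuotientGroup.mk a : Braid N) * (QuotientGroup.mk b : Braid N)⁻¹ = 1 := by
    rw [← QuotientGroup.mk_inv, ← QuotientGroup.mk_mul]; exact h1
  exact mul_inv_eq_one.mp h2

theorem braid_braid {N : ℕ} {i j : Fin N} (hij : (i : ℕ) + 1 = (j : ℕ)) :
    (PresentedGroup.of i * PresentedGroup.of j * PresentedGroup.of i : Braid N) =
      PresentedGroup.of j * PresentedGroup.of i * PresentedGroup.of j := by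
  have h := braid_mk_rel (N := N) (a := FreeGroup.of i * FreeGroup.of j * FreeGroup.of i)
    (b := FreeGroup.of j * FreeGroup.of i * FreeGroup.of j) ⟨i, j, Or.inl ⟨hij, rfl⟩⟩
  simpa [map_mul, PresentedGroup.of] using PresentedGroup.mk_eq_mk_of_mul_inv_mem
    (rels := braidRels N) (x := FreeGroup.of i * FreeGroup.of j * FreeGroup.of i)
    (y := FreeGroup.of j * FreeGroup.of i * FreeGroup.of j) ⟨i, j, Or.inl ⟨hij, rfl⟩⟩

theorem braid_comm {N : ℕ} {i j : Fin N} (hij : (i : ℕ) + 2 ≤ (j : ℕ)) :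
    (PresentedGroup.of i * PresentedGroup.of j : Braid N) =
      PresentedGroup.of j * PresentedGroup.of i := by
  have h := braid_mk_rel (N := N) (a := FreeGroup.of i * FreeGroup.of j)
    (b := FreeGroup.of j * FreeGroup.of i) ⟨i, j, Or.inr ⟨hij, rfl⟩⟩
  simpa [map_mul, PresentedGroup.of] using PresentedGroup.mk_eq_mk_of_mul_inv_mem
    (rels := braidRels N) (x := FreeGroup.of i * FreeGroup.of j)
    (y := FreeGroup.of j * FreeGroup.of i) ⟨i, j, Or.inr ⟨hij, rfl⟩⟩

open scoped Classical in
/-- The Matsumoto section `π ↦ c_π`: the braid group element obtained as the product of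
generators along a reduced decomposition of `π` (this is independent of the chosen
reduced decomposition). -/
noncomputable def mats (N : ℕ) (π : Equiv.Perm (Fin (N + 1))) : Braid N :=
  if h : ∃ l : List ℕ, IsReduced (N + 1) l π then bword N h.choose else 1

/-- `c_π` viewed in the group algebra `k[B_{N+1}]`. -/
noncomputable def cOf (𝕜 : Type*) [Field 𝕜] (N : ℕ) (π : Equiv.Perm (Fin (N + 1))) :
    MonoidAlgebra 𝕜 (Braid N) := MonoidAlgebra.of 𝕜 (Braid N) (mats N π)

/-- The braided symmetrizer `S_{N+1} = Σ_{π ∈ S_{N+1}} c_π ∈ k[B_{N+1}]`. -/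
noncomputable def symEl (𝕜 : Type*) [Field 𝕜] (N : ℕ) : MonoidAlgebra 𝕜 (Braid N) :=
  ∑ π : Equiv.Perm (Fin (N + 1)), cOf 𝕜 N π

open scoped Classical in
/-- `g_{n,j} = Σ_{π ∈ S̃_{n,j}} c_{π⁻¹} ∈ k[B_{n+1}]`, with `g_{n,j} = 0` for `j > n`. -/
noncomputable def gEl (𝕜 : Type*) [Field 𝕜] (n j : ℕ) : MonoidAlgebra 𝕜 (Braid n) :=
  if j ≤ n then
    ∑ π : Equiv.Perm (Fin (n + 1)), if StildeP n j π then cOf 𝕜 n π⁻¹ else 0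
  else 0

/-- The shift homomorphism `B_{N+1} → B_{M+1}`, `c_j ↦ c_{j+off}`. -/
noncomputable def shiftHom (N M off : ℕ) (h : N + off ≤ M) : Braid N →* Braid M :=
  PresentedGroup.toGroup
    (f := fun i : Fin N =>
      PresentedGroup.of (⟨(i : ℕ) + off, by have := i.isLt; omega⟩ : Fin M))
    (by
      rintro r ⟨i, j, hr⟩
      rcases hr with ⟨hij, rfl⟩ | ⟨hij, rfl⟩ <;>
        simp only [map_mul, map_inv, FreeGroup.lift_apply_of, mul_inv_eq_one]
      · exact braid_braid (show (i : ℕ) + off + 1 = (j : ℕ) + off by omega)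
      · exact braid_comm (show (i : ℕ) + off + 2 ≤ (j : ℕ) + off by omega))

end Stmt
namespace Stmt

/-- Membership of `σ ∈ S_{j,n−j} ⊆ S_n ⊆ S_{n+1}`: `σ` fixes the last point and is a
`j`-shuffle of `S_n`, i.e. `σ(1) < ⋯ < σ(j)` and `σ(j+1) < ⋯ < σ(n)` (0-based). -/
def ShufEmbP (n j : ℕ) (σ : Equiv.Perm (Fin (n + 1))) : Prop :=
  σ (Fin.last n) = Fin.last n ∧
  (∀ a b : Fin (n + 1), a < b → (b : ℕ) < j → σ a < σ b) ∧
  (∀ a b : Fin (n + 1), j ≤ (a : ℕ) → a < b → (b : ℕ) < n → σ a < σ b)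

open scoped Classical in
/-- The shuffle sum `S_{j,n−j} = Σ_{σ ∈ S_{j,n−j} ⊆ S_n} c_{σ⁻¹} ∈ k[B_{n+1}]`. -/
noncomputable def shufSumEmb (𝕜 : Type*) [Field 𝕜] (n j : ℕ) :
    MonoidAlgebra 𝕜 (Braid n) :=
  ∑ π : Equiv.Perm (Fin (n + 1)), if ShufEmbP n j π then cOf 𝕜 n π⁻¹ else 0

/-- The word (in 0-based generator indices) for
`ω_m = (c_{m−1})(c_{m−2} c_{m−1}) ⋯ (c_1 ⋯ c_{m−1}) ∈ B_m` (with `ω_1 = 1`). -/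
def omegaWord (m : ℕ) : List ℕ :=
  (List.range (m - 1)).flatMap (fun t => (List.range (t + 1)).map (fun r => m - 2 - t + r))

end Stmt

namespace Stmt

section Chunk1
open Finset

variable {m : ℕ}

/-- The inversion set of a permutation. -/
def invSet (m : ℕ) (π : Equiv.Perm (Fin m)) : Finset (Fin m × Fin m) :=
  Finset.univ.filter (fun p => p.1 < p.2 ∧ π p.2 < π p.1)

/-- The number of inversions. -/
def invN (m : ℕ) (π : Equiv.Perm (Fin m)) : ℕ := (invSet m π).card

lemma mem_invSet {π : Equiv.Perm (Fin m)} {p : Fin m × Fin m} :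
    p ∈ invSet m π ↔ p.1 < p.2 ∧ π p.2 < π p.1 := by simp [invSet]

lemma sNat_coe {i : ℕ} (h : i + 1 < m) (x : Fin m) :
    (sNat m i x : ℕ) = if (x : ℕ) = i then i + 1 else if (x : ℕ) = i + 1 then i else x := by
  rw [sNat, dif_pos h]
  simp only [Equiv.swap_apply_def]
  split_ifs <;> simp_all [Fin.ext_iff]

lemma sNat_out {i : ℕ} (h : ¬ i + 1 < m) : sNat m i = 1 := dif_neg h

lemma sNat_mul_self (i : ℕ) : sNat m i * sNat m i = 1 := by
  by_cases h : i + 1 < m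
  · rw [sNat, dif_pos h]; exact Equiv.swap_mul_self _ _
  · rw [sNat_out h]; simp

lemma sNat_sNat (i : ℕ) (x : Fin m) : sNat m i (sNat m i x) = x := by
  have := sNat_mul_self (m := m) i
  calc sNat m i (sNat m i x) = (sNat m i * sNat m i) x := rfl
    _ = x := by rw [this]; rfl

lemma mul_sNat_sNat (π : Equiv.Perm (Fin m)) (i : ℕ) : π * sNat m i * sNat m i = π := by
  rw [mul_assoc, sNat_mul_self, mul_one]

lemma sNat_left {i : ℕ} (h : i + 1 < m) :
    sNat m i ⟨i, by omega⟩ = ⟨i + 1, h⟩ := by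
  have := sNat_coe h (⟨i, by omega⟩ : Fin m)
  simp at this; exact Fin.ext (by simpa using this)

lemma sNat_right {i : ℕ} (h : i + 1 < m) :
    sNat m i ⟨i + 1, h⟩ = ⟨i, by omega⟩ := by
  have := sNat_coe h (⟨i + 1, h⟩ : Fin m)
  simp at this; exact Fin.ext (by simpa using this)

lemma toPerm_nil : toPerm m [] = 1 := rfl

lemma toPerm_cons (i : ℕ) (l : List ℕ) : toPerm m (i :: l) = sNat m i * toPerm m l := by
  simp [toPerm]

lemma toPerm_append (l₁ l₂ : List ℕ) :
    toPerm m (l₁ ++ l₂) = toPerm m l₁ * toPerm m l₂ := by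
  simp [toPerm]

lemma toPerm_concat (l : List ℕ) (i : ℕ) :
    toPerm m (l ++ [i]) = toPerm m l * sNat m i := by
  simp [toPerm]

lemma sNat_lt_of_lt {i : ℕ} (h : i + 1 < m) {x y : Fin m} (hxy : x < y)
    (hne : ¬((x : ℕ) = i ∧ (y : ℕ) = i + 1)) : sNat m i x < sNat m i y := by
  have hx := sNat_coe h x; have hy := sNat_coe h y
  have hx2 := x.isLt; have hy2 := y.isLt
  rw [Fin.lt_iff_val_lt_val] at hxy ⊢
  split_ifs at hx hy <;> omega

end Chunk1
section Chunk2
open Finset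

variable {m : ℕ}

lemma invSet_mul_sNat_of_lt {i : ℕ} (h : i + 1 < m) (π : Equiv.Perm (Fin m))
    (hπ : π ⟨i, by omega⟩ < π ⟨i + 1, h⟩) :
    invSet m (π * sNat m i) =
      insert ((⟨i, by omega⟩ : Fin m), (⟨i + 1, h⟩ : Fin m))
        ((invSet m π).image (fun p => (sNat m i p.1, sNat m i p.2))) := by
  set a : Fin m := ⟨i, by omega⟩ with ha
  set b : Fin m := ⟨i + 1, h⟩ with hb
  have hab : a < b := by rw [Fin.lt_iff_val_lt_val]; simp [ha, hb]
  have hsa : sNat m i a = b := sNat_left h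
  have hsb : sNat m i b = a := sNat_right h
  ext q
  simp only [mem_insert, Finset.mem_image, mem_invSet, Equiv.Perm.mul_apply]
  constructor
  · rintro ⟨h1, h2⟩
    by_cases hq : q = (a, b)
    · exact Or.inl hq
    · refine Or.inr ⟨(sNat m i q.1, sNat m i q.2), ⟨?_, ?_⟩, ?_⟩
      · apply sNat_lt_of_lt h h1
        intro ⟨e1, e2⟩
        exact hq (Prod.ext (Fin.ext e1) (Fin.ext e2))
      · simpa [sNat_sNat] using h2
      · simp [sNat_sNat]
  · rintro (rfl | ⟨p, ⟨hp1, hp2⟩, rfl⟩)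
    · exact ⟨hab, by simpa [hsa, hsb] using hπ⟩
    · have hpne : ¬((p.1 : ℕ) = i ∧ (p.2 : ℕ) = i + 1) := by
        rintro ⟨e1, e2⟩
        have : p.1 = a := Fin.ext e1
        have h2 : p.2 = b := Fin.ext e2
        rw [this, h2] at hp2
        exact absurd hp2 (asymm hπ)
      exact ⟨sNat_lt_of_lt h hp1 hpne, by simpa [sNat_sNat] using hp2⟩

lemma invN_succ_of_lt {i : ℕ} (h : i + 1 < m) (π : Equiv.Perm (Fin m))
    (hπ : π ⟨i, by omega⟩ < π ⟨i + 1, h⟩) :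
    invN m (π * sNat m i) = invN m π + 1 := by
  have hinj : Function.Injective (fun p : Fin m × Fin m => (sNat m i p.1, sNat m i p.2)) := by
    intro p q hpq
    simp only [Prod.mk.injEq] at hpq
    exact Prod.ext ((sNat m i).injective hpq.1) ((sNat m i).injective hpq.2)
  rw [invN, invSet_mul_sNat_of_lt h π hπ, Finset.card_insert_of_notMem, Finset.card_image_of_injective _ hinj]
  · rfl
  intro hmem
  rw [Finset.mem_image] at hmem
  obtain ⟨p, hp, hpe⟩ := hmem
  rw [mem_invSet] at hp
  simp only [Prod.mk.injEq] at hpe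
  have h1 : p.1 = sNat m i ⟨i, by omega⟩ := by
    rw [← hpe.1, sNat_sNat]
  have h2 : p.2 = sNat m i ⟨i + 1, h⟩ := by
    rw [← hpe.2, sNat_sNat]
  rw [sNat_left h] at h1
  rw [sNat_right h] at h2
  have := hp.1
  rw [h1, h2, Fin.lt_iff_val_lt_val] at this
  simp at this

lemma invN_pred_of_gt {i : ℕ} (h : i + 1 < m) (π : Equiv.Perm (Fin m))
    (hπ : π ⟨i + 1, h⟩ < π ⟨i, by omega⟩) :
    invN m π = invN m (π * sNat m i) + 1 := by
  have := invN_succ_of_lt h (π * sNat m i) (by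
    simp only [Equiv.Perm.mul_apply, sNat_left h, sNat_right h]
    exact hπ)
  rwa [mul_sNat_sNat] at this

lemma apply_ne_apply {i : ℕ} (h : i + 1 < m) (π : Equiv.Perm (Fin m)) :
    π ⟨i, by omega⟩ ≠ π ⟨i + 1, h⟩ := by
  intro he
  have := π.injective he
  rw [Fin.ext_iff] at this; simp at this

lemma invN_mul_sNat_le (π : Equiv.Perm (Fin m)) (i : ℕ) :
    invN m (π * sNat m i) ≤ invN m π + 1 := by
  by_cases h : i + 1 < m
  · rcases lt_or_gt_of_ne (apply_ne_apply h π) with hlt | hgt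
    · rw [invN_succ_of_lt h π hlt]
    · rw [invN_pred_of_gt h π hgt]; omega
  · rw [sNat_out h, mul_one]; omega

lemma descent_iff {i : ℕ} (h : i + 1 < m) (π : Equiv.Perm (Fin m)) :
    invN m π = invN m (π * sNat m i) + 1 ↔ π ⟨i + 1, h⟩ < π ⟨i, by omega⟩ := by
  constructor
  · intro he
    rcases lt_or_gt_of_ne (apply_ne_apply h π) with hlt | hgt
    · rw [invN_succ_of_lt h π hlt] at he; omega
    · exact hgt
  · exact invN_pred_of_gt h π

end Chunk2
section Chunk3
open Finset

variable {m : ℕ}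

lemma invSet_one : invSet m 1 = ∅ := by
  ext p
  simp only [mem_invSet, Equiv.Perm.one_apply, Finset.notMem_empty, iff_false]
  rintro ⟨h1, h2⟩
  exact absurd h2 (asymm h1)

lemma invN_one : invN m 1 = 0 := by rw [invN, invSet_one]; rfl

lemma invN_toPerm_le (l : List ℕ) : invN m (toPerm m l) ≤ l.length := by
  induction l using List.reverseRecOn with
  | nil => simp [toPerm_nil, invN_one]
  | append_singleton l i ih =>
    rw [toPerm_concat]
    calc invN m (toPerm m l * sNat m i) ≤ invN m (toPerm m l) + 1 := invN_mul_sNat_le _ _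
      _ ≤ l.length + 1 := by omega
      _ = (l ++ [i]).length := by simp

lemma eq_one_of_no_descent {π : Equiv.Perm (Fin m)}
    (hd : ∀ i : ℕ, ∀ h : i + 1 < m, π ⟨i, by omega⟩ < π ⟨i + 1, h⟩) : π = 1 := by
  rcases Nat.eq_zero_or_pos m with rfl | hm
  · ext x; exact absurd x.isLt (by omega)
  · obtain ⟨m', rfl⟩ : ∃ m', m = m' + 1 := ⟨m - 1, by omega⟩
    have hsm : StrictMono π := by
      rw [Fin.strictMono_iff_lt_succ]
      intro i
      have := hd i.val (by omega)
      exact this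
    have hid : StrictMono (id : Fin (m' + 1) → Fin (m' + 1)) := strictMono_id
    haveI : WellFoundedLT (Fin (m' + 1)) := inferInstance
    have : (π : Fin (m' + 1) → Fin (m' + 1)) = id := by
      apply (hsm.range_inj hid).1
      rw [Set.range_id]
      exact Set.range_eq_univ.mpr π.surjective
    exact Equiv.ext fun x => congrFun this x

lemma exists_descent {π : Equiv.Perm (Fin m)} (hπ : π ≠ 1) :
    ∃ i : ℕ, ∃ h : i + 1 < m, π ⟨i + 1, h⟩ < π ⟨i, by omega⟩ := by
  by_contra hc
  push_neg at hc
  apply hπ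
  apply eq_one_of_no_descent
  intro i h
  rcases lt_or_gt_of_ne (apply_ne_apply h π) with hlt | hgt
  · exact hlt
  · exact absurd (hc i h) (not_le.mpr hgt)

lemma exists_word (π : Equiv.Perm (Fin m)) :
    ∃ l : List ℕ, l.length = invN m π ∧ toPerm m l = π ∧ ∀ x ∈ l, x + 1 < m := by
  generalize hN : invN m π = N
  induction N using Nat.strong_induction_on generalizing π with
  | _ N ih =>
    by_cases hπ : π = 1
    · exact ⟨[], by simp [hπ, toPerm_nil, ← hN, invN_one]⟩
    · obtain ⟨i, h, hd⟩ := exists_descent hπ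
      have hdec : invN m π = invN m (π * sNat m i) + 1 := invN_pred_of_gt h π hd
      obtain ⟨l, hl1, hl2, hl3⟩ := ih (invN m (π * sNat m i)) (by omega) (π * sNat m i) rfl
      refine ⟨l ++ [i], by simp [hl1]; omega, ?_, ?_⟩
      · rw [toPerm_concat, hl2, mul_sNat_sNat]
      · intro x hx
        rcases List.mem_append.mp hx with hx | hx
        · exact hl3 x hx
        · simp at hx; omega

lemma isReduced_iff {l : List ℕ} {π : Equiv.Perm (Fin m)} :
    IsReduced m l π ↔ toPerm m l = π ∧ l.length = invN m π := by
  constructor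
  · rintro ⟨h1, h2⟩
    refine ⟨h1, le_antisymm ?_ ?_⟩
    · obtain ⟨l', hl1, hl2, _⟩ := exists_word π
      calc l.length ≤ l'.length := h2 l' hl2
        _ = invN m π := hl1
    · rw [← h1]; exact invN_toPerm_le l
  · rintro ⟨h1, h2⟩
    refine ⟨h1, fun l' hl' => ?_⟩
    rw [h2, ← hl']
    exact invN_toPerm_le l'

lemma isReduced_concat {l : List ℕ} {π : Equiv.Perm (Fin m)} {i : ℕ}
    (hred : IsReduced m (l ++ [i]) π) :
    (i + 1 < m) ∧ IsReduced m l (π * sNat m i) ∧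
      invN m π = invN m (π * sNat m i) + 1 := by
  rw [isReduced_iff] at hred
  obtain ⟨h1, h2⟩ := hred
  simp only [List.length_append, List.length_cons, List.length_nil] at h2
  have hi : i + 1 < m := by
    by_contra hc
    have : toPerm m l = π := by
      rw [← h1, toPerm_concat, sNat_out hc, mul_one]
    have hle := invN_toPerm_le (m := m) l
    rw [this] at hle
    omega
  have hl : toPerm m l = π * sNat m i := by
    rw [← h1, toPerm_concat, mul_sNat_sNat]
  have hge : invN m (π * sNat m i) ≤ l.length := by rw [← hl]; exact invN_toPerm_le l
  have hle : invN m π ≤ l.length + 1 := by omega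
  have hb : invN m π ≤ invN m (π * sNat m i) + 1 := by
    have := invN_mul_sNat_le (π * sNat m i) i
    rwa [mul_sNat_sNat] at this
  rcases lt_or_gt_of_ne (apply_ne_apply hi π) with hlt | hgt
  · exfalso
    have := invN_succ_of_lt hi π hlt
    omega
  · have hdec := invN_pred_of_gt hi π hgt
    exact ⟨hi, isReduced_iff.mpr ⟨hl, by omega⟩, hdec⟩

lemma isReduced_append {l₁ l₂ : List ℕ} {α β : Equiv.Perm (Fin m)}
    (h₁ : IsReduced m l₁ α) (h₂ : IsReduced m l₂ β)
    (hadd : invN m (α * β) = invN m α + invN m β) :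
    IsReduced m (l₁ ++ l₂) (α * β) := by
  rw [isReduced_iff] at h₁ h₂ ⊢
  refine ⟨by rw [toPerm_append, h₁.1, h₂.1], ?_⟩
  simp [h₁.2, h₂.2, hadd]

lemma exists_isReduced (π : Equiv.Perm (Fin m)) : ∃ l, IsReduced m l π := by
  obtain ⟨l, h1, h2, _⟩ := exists_word π
  exact ⟨l, isReduced_iff.mpr ⟨h2, h1⟩⟩

lemma isReduced_mem_lt {l : List ℕ} {π : Equiv.Perm (Fin m)}
    (hred : IsReduced m l π) : ∀ x ∈ l, x + 1 < m := by
  intro x hx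
  by_contra hc
  obtain ⟨s, t, rfl⟩ := List.append_of_mem hx
  have : toPerm m (s ++ t) = π := by
    rw [toPerm_append, ← hred.1]
    rw [show s ++ x :: t = s ++ ([x] ++ t) by simp, toPerm_append, toPerm_append]
    congr 1
    rw [show toPerm m [x] = sNat m x from by simp [toPerm], sNat_out hc, one_mul]
  have := hred.2 _ this
  simp at this

end Chunk3
section Chunk4

variable {m : ℕ}

lemma sNat_fixed {i : ℕ} (h : i + 1 < m) (x : Fin m) (hx1 : (x : ℕ) ≠ i)
    (hx2 : (x : ℕ) ≠ i + 1) : sNat m i x = x := by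
  apply Fin.ext
  rw [sNat_coe h]
  simp [hx1, hx2]

lemma sNat_comm {i j : ℕ} (hij : i + 2 ≤ j) :
    sNat m i * sNat m j = sNat m j * sNat m i := by
  by_cases hj : j + 1 < m
  · have hi : i + 1 < m := by omega
    apply Equiv.ext; intro x
    apply Fin.ext
    have hx := x.isLt
    simp only [Equiv.Perm.mul_apply, sNat_coe hi, sNat_coe hj]
    split_ifs <;> omega
  · rw [sNat_out hj, one_mul, mul_one]

set_option maxHeartbeats 2000000 in
lemma sNat_braid {i : ℕ} (h : i + 2 < m) :
    sNat m i * sNat m (i + 1) * sNat m i = sNat m (i + 1) * sNat m i * sNat m (i + 1) := by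
  have hi : i + 1 < m := by omega
  apply Equiv.ext; intro x
  apply Fin.ext
  have hx := x.isLt
  simp only [Equiv.Perm.mul_apply, sNat_coe hi, sNat_coe h]
  split_ifs <;> omega

end Chunk4

section Chunk5

variable {n : ℕ}

lemma bgen_lt {i : ℕ} (h : i < n) : bgen n i = PresentedGroup.of (⟨i, h⟩ : Fin n) :=
  dif_pos h

lemma bword_append (l₁ l₂ : List ℕ) : bword n (l₁ ++ l₂) = bword n l₁ * bword n l₂ := by
  simp [bword]

lemma bword_concat (l : List ℕ) (i : ℕ) : bword n (l ++ [i]) = bword n l * bgen n i := by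
  simp [bword]

lemma bgen_comm {i j : ℕ} (hj : j < n) (hij : i + 2 ≤ j) :
    bgen n i * bgen n j = bgen n j * bgen n i := by
  have hi : i < n := by omega
  rw [bgen_lt hi, bgen_lt hj]
  exact braid_comm (by simpa using hij)

lemma bgen_braid {i : ℕ} (h : i + 1 < n) :
    bgen n i * bgen n (i + 1) * bgen n i = bgen n (i + 1) * bgen n i * bgen n (i + 1) := by
  have hi : i < n := by omega
  rw [bgen_lt hi, bgen_lt h]
  exact braid_braid (by simp)

set_option maxHeartbeats 2000000 in
lemma matsumoto_key (L : ℕ)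
    (ih : ∀ (ρ : Equiv.Perm (Fin (n + 1))) (l₁ l₂ : List ℕ), l₁.length ≤ L →
      IsReduced (n + 1) l₁ ρ → IsReduced (n + 1) l₂ ρ → bword n l₁ = bword n l₂)
    (π : Equiv.Perm (Fin (n + 1))) (t₁ t₂ : List ℕ) (i j : ℕ) (hij : i < j)
    (h₁ : IsReduced (n + 1) (t₁ ++ [i]) π) (h₂ : IsReduced (n + 1) (t₂ ++ [j]) π)
    (hL : t₁.length ≤ L) :
    bword n (t₁ ++ [i]) = bword n (t₂ ++ [j]) := by
  obtain ⟨hi, hred₁, hdec₁⟩ := isReduced_concat h₁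
  obtain ⟨hj, hred₂, hdec₂⟩ := isReduced_concat h₂
  have hlen₁ : t₁.length = invN (n + 1) (π * sNat (n + 1) i) := (isReduced_iff.mp hred₁).2
  have hlen₂ : t₂.length = invN (n + 1) (π * sNat (n + 1) j) := (isReduced_iff.mp hred₂).2
  have di : π ⟨i + 1, hi⟩ < π ⟨i, by omega⟩ := (descent_iff hi π).mp hdec₁
  have dj : π ⟨j + 1, hj⟩ < π ⟨j, by omega⟩ := (descent_iff hj π).mp hdec₂
  rcases Nat.lt_or_ge (i + 1) j with hcase | hcase
  · -- commuting case : i + 2 ≤ j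
    have hij2 : i + 2 ≤ j := by omega
    have dj' : (π * sNat (n + 1) i) ⟨j + 1, hj⟩ < (π * sNat (n + 1) i) ⟨j, by omega⟩ := by
      simp only [Equiv.Perm.mul_apply]
      rw [sNat_fixed hi _ (by simp; omega) (by simp; omega),
        sNat_fixed hi _ (by simp; omega) (by simp; omega)]
      exact dj
    have hu : invN (n + 1) (π * sNat (n + 1) i) =
        invN (n + 1) (π * sNat (n + 1) i * sNat (n + 1) j) + 1 :=
      invN_pred_of_gt hj _ dj'
    have hcomm : π * sNat (n + 1) i * sNat (n + 1) j = π * sNat (n + 1) j * sNat (n + 1) i := by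
      rw [mul_assoc, mul_assoc, sNat_comm hij2]
    obtain ⟨r, hr⟩ := exists_isReduced (π * sNat (n + 1) i * sNat (n + 1) j)
    have hrlen : r.length = invN (n + 1) (π * sNat (n + 1) i * sNat (n + 1) j) :=
      (isReduced_iff.mp hr).2
    have hrj : IsReduced (n + 1) (r ++ [j]) (π * sNat (n + 1) i) := by
      rw [isReduced_iff]
      constructor
      · rw [toPerm_concat, (isReduced_iff.mp hr).1, mul_sNat_sNat]
      · simp only [List.length_append, List.length_cons, List.length_nil, hrlen]; omega
    have hri : IsReduced (n + 1) (r ++ [i]) (π * sNat (n + 1) j) := by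
      rw [isReduced_iff]
      constructor
      · rw [toPerm_concat, (isReduced_iff.mp hr).1, hcomm, mul_sNat_sNat]
      · simp only [List.length_append, List.length_cons, List.length_nil, hrlen]; omega
    have e₁ : bword n t₁ = bword n (r ++ [j]) := ih _ t₁ (r ++ [j]) hL hred₁ hrj
    have e₂ : bword n t₂ = bword n (r ++ [i]) := ih _ t₂ (r ++ [i]) (by omega) hred₂ hri
    rw [bword_concat, bword_concat, e₁, e₂, bword_concat, bword_concat,
      mul_assoc, mul_assoc, bgen_comm (by omega) hij2]
  · -- braid case : j = i + 1
    have hj1 : j = i + 1 := by omega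
    subst hj1
    have e3 : sNat (n + 1) i (⟨i + 1 + 1, hj⟩ : Fin (n + 1)) = ⟨i + 1 + 1, hj⟩ :=
      sNat_fixed hi _ (by simp <;> omega) (by simp <;> omega)
    have d₁ : (π * sNat (n + 1) i) ⟨i + 1 + 1, hj⟩ < (π * sNat (n + 1) i) ⟨i + 1, by omega⟩ := by
      simp only [Equiv.Perm.mul_apply, e3, sNat_right hi]
      exact lt_trans dj di
    have hA : invN (n + 1) (π * sNat (n + 1) i) =
        invN (n + 1) (π * sNat (n + 1) i * sNat (n + 1) (i + 1)) + 1 :=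
      invN_pred_of_gt hj _ d₁
    have d₂ : (π * sNat (n + 1) i * sNat (n + 1) (i + 1)) ⟨i + 1, by omega⟩ <
        (π * sNat (n + 1) i * sNat (n + 1) (i + 1)) ⟨i, by omega⟩ := by
      have e1 : sNat (n + 1) (i + 1) (⟨i + 1, by omega⟩ : Fin (n + 1)) = ⟨i + 1 + 1, hj⟩ :=
        sNat_left hj
      have e2 : sNat (n + 1) (i + 1) (⟨i, by omega⟩ : Fin (n + 1)) = ⟨i, by omega⟩ :=
        sNat_fixed hj _ (by simp) (by simp <;> omega)
      have e4 : sNat (n + 1) i (⟨i, by omega⟩ : Fin (n + 1)) = ⟨i + 1, by omega⟩ := sNat_left hi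
      simp only [Equiv.Perm.mul_apply, e1, e2, e3, e4]
      exact dj
    have hB : invN (n + 1) (π * sNat (n + 1) i * sNat (n + 1) (i + 1)) =
        invN (n + 1) (π * sNat (n + 1) i * sNat (n + 1) (i + 1) * sNat (n + 1) i) + 1 :=
      invN_pred_of_gt hi _ d₂
    have hbr : π * sNat (n + 1) i * sNat (n + 1) (i + 1) * sNat (n + 1) i =
        π * sNat (n + 1) (i + 1) * sNat (n + 1) i * sNat (n + 1) (i + 1) := by
      rw [mul_assoc, mul_assoc, mul_assoc, mul_assoc]
      congr 1
      rw [← mul_assoc, ← mul_assoc, sNat_braid hj]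
    have husi : π * sNat (n + 1) i * sNat (n + 1) (i + 1) * sNat (n + 1) i * sNat (n + 1) i =
        π * sNat (n + 1) i * sNat (n + 1) (i + 1) := mul_sNat_sNat _ _
    have husj : π * sNat (n + 1) i * sNat (n + 1) (i + 1) * sNat (n + 1) i * sNat (n + 1) (i + 1) =
        π * sNat (n + 1) (i + 1) * sNat (n + 1) i := by
      rw [hbr, mul_sNat_sNat]
    have hCle : invN (n + 1) (π * sNat (n + 1) (i + 1)) ≤
        invN (n + 1) (π * sNat (n + 1) (i + 1) * sNat (n + 1) i) + 1 := by
      have h2 : π * sNat (n + 1) (i + 1) * sNat (n + 1) i * sNat (n + 1) i =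
          π * sNat (n + 1) (i + 1) := mul_sNat_sNat _ _
      have h' := invN_mul_sNat_le (π * sNat (n + 1) (i + 1) * sNat (n + 1) i) i
      rwa [h2] at h'
    have hDle : invN (n + 1) (π * sNat (n + 1) (i + 1) * sNat (n + 1) i) ≤
        invN (n + 1) (π * sNat (n + 1) i * sNat (n + 1) (i + 1) * sNat (n + 1) i) + 1 := by
      have h' := invN_mul_sNat_le (π * sNat (n + 1) i * sNat (n + 1) (i + 1) * sNat (n + 1) i)
        (i + 1)
      rwa [husj] at h'
    obtain ⟨r, hr⟩ := exists_isReduced (π * sNat (n + 1) i * sNat (n + 1) (i + 1) * sNat (n + 1) i)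
    have hrlen : r.length =
        invN (n + 1) (π * sNat (n + 1) i * sNat (n + 1) (i + 1) * sNat (n + 1) i) :=
      (isReduced_iff.mp hr).2
    have hri : IsReduced (n + 1) ((r ++ [i]) ++ [i + 1]) (π * sNat (n + 1) i) := by
      rw [isReduced_iff]
      constructor
      · rw [toPerm_concat, toPerm_concat, (isReduced_iff.mp hr).1, husi, mul_sNat_sNat]
      · simp only [List.length_append, List.length_cons, List.length_nil, hrlen]; omega
    have hrj : IsReduced (n + 1) ((r ++ [i + 1]) ++ [i]) (π * sNat (n + 1) (i + 1)) := by
      rw [isReduced_iff]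
      constructor
      · rw [toPerm_concat, toPerm_concat, (isReduced_iff.mp hr).1, husj, mul_sNat_sNat]
      · simp only [List.length_append, List.length_cons, List.length_nil, hrlen]; omega
    have e₁ : bword n t₁ = bword n ((r ++ [i]) ++ [i + 1]) := ih _ t₁ _ hL hred₁ hri
    have e₂ : bword n t₂ = bword n ((r ++ [i + 1]) ++ [i]) := ih _ t₂ _ (by omega) hred₂ hrj
    rw [bword_concat, bword_concat, e₁, e₂, bword_concat, bword_concat,
      bword_concat, bword_concat]
    simp only [mul_assoc]
    congr 1
    rw [← mul_assoc, ← mul_assoc, bgen_braid (by omega)]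

lemma matsumoto : ∀ (L : ℕ) (π : Equiv.Perm (Fin (n + 1))) (l₁ l₂ : List ℕ),
    l₁.length ≤ L → IsReduced (n + 1) l₁ π → IsReduced (n + 1) l₂ π →
    bword n l₁ = bword n l₂ := by
  intro L
  induction L with
  | zero =>
    intro π l₁ l₂ hlen h₁ h₂
    have hlen₁ : l₁.length = invN (n + 1) π := (isReduced_iff.mp h₁).2
    have hlen₂ : l₂.length = invN (n + 1) π := (isReduced_iff.mp h₂).2
    have e₁ : l₁ = [] := List.eq_nil_of_length_eq_zero (by omega)
    have e₂ : l₂ = [] := List.eq_nil_of_length_eq_zero (by omega)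
    rw [e₁, e₂]
  | succ L ih =>
    intro π l₁ l₂ hlen h₁ h₂
    have hlen₁ : l₁.length = invN (n + 1) π := (isReduced_iff.mp h₁).2
    have hlen₂ : l₂.length = invN (n + 1) π := (isReduced_iff.mp h₂).2
    rcases List.eq_nil_or_concat l₁ with rfl | ⟨t₁, i, rfl⟩
    · have e₂ : l₂ = [] := List.eq_nil_of_length_eq_zero (by simp at hlen₁; omega)
      rw [e₂]
    rcases List.eq_nil_or_concat l₂ with rfl | ⟨t₂, j, rfl⟩
    · exfalso; simp at hlen₁ hlen₂; omega
    rw [List.concat_eq_append] at h₁ hlen₁ hlen ⊢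
    rw [List.concat_eq_append] at h₂ hlen₂ ⊢
    have hL : t₁.length ≤ L := by simp at hlen; omega
    have hL' : t₂.length ≤ L := by simp at hlen₁ hlen₂; omega
    rcases lt_trichotomy i j with hij | rfl | hij
    · exact matsumoto_key L ih π t₁ t₂ i j hij h₁ h₂ hL
    · obtain ⟨hi, hred₁, _⟩ := isReduced_concat h₁
      obtain ⟨_, hred₂, _⟩ := isReduced_concat h₂
      rw [bword_concat, bword_concat, ih _ t₁ t₂ hL hred₁ hred₂]
    · exact (matsumoto_key L ih π t₂ t₁ j i hij h₂ h₁ hL').symm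

end Chunk5
section Chunk6

lemma mats_eq {n : ℕ} {π : Equiv.Perm (Fin (n + 1))} {l : List ℕ}
    (hl : IsReduced (n + 1) l π) : mats n π = bword n l := by
  have hex : ∃ l', IsReduced (n + 1) l' π := ⟨l, hl⟩
  rw [mats, dif_pos hex]
  exact matsumoto hex.choose.length π hex.choose l le_rfl hex.choose_spec hl

lemma mats_mul {n : ℕ} {α β : Equiv.Perm (Fin (n + 1))}
    (h : invN (n + 1) (α * β) = invN (n + 1) α + invN (n + 1) β) :
    mats n (α * β) = mats n α * mats n β := by
  obtain ⟨l₁, h₁⟩ := exists_isReduced α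
  obtain ⟨l₂, h₂⟩ := exists_isReduced β
  rw [mats_eq h₁, mats_eq h₂, mats_eq (isReduced_append h₁ h₂ h), bword_append]

lemma invN_inv {m : ℕ} (π : Equiv.Perm (Fin m)) : invN m π⁻¹ = invN m π := by
  rw [invN, invN]
  apply Finset.card_nbij' (i := fun p => (π⁻¹ p.2, π⁻¹ p.1)) (j := fun p => (π p.2, π p.1))
  · intro p hp
    rw [Finset.mem_coe, mem_invSet] at hp ⊢
    exact ⟨hp.2, by simpa using hp.1⟩
  · intro p hp
    rw [Finset.mem_coe, mem_invSet] at hp ⊢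
    exact ⟨hp.2, by simpa using hp.1⟩
  · intro p _; simp
  · intro p _; simp

/-- The function reversing the tail block `[k, m-1]` of `Fin m`. -/
def revF (m k : ℕ) (x : Fin m) : Fin m :=
  if h : (x : ℕ) < k then x else ⟨k + (m - 1) - x, by have := x.isLt; omega⟩

lemma revF_coe (m k : ℕ) (x : Fin m) :
    (revF m k x : ℕ) = if (x : ℕ) < k then (x : ℕ) else k + (m - 1) - x := by
  unfold revF; split_ifs <;> rfl

lemma revF_invol (m k : ℕ) : Function.Involutive (revF m k) := by
  intro x
  have hx := x.isLt
  apply Fin.ext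
  rw [revF_coe, revF_coe]
  split_ifs <;> omega

/-- The permutation reversing the tail block `[k, m-1]` of `Fin m`. -/
def revP (m k : ℕ) : Equiv.Perm (Fin m) := Function.Involutive.toPerm _ (revF_invol m k)

lemma revP_coe (m k : ℕ) (x : Fin m) :
    (revP m k x : ℕ) = if (x : ℕ) < k then (x : ℕ) else k + (m - 1) - x := revF_coe m k x

lemma revP_revP (m k : ℕ) (x : Fin m) : revP m k (revP m k x) = x := revF_invol m k x

lemma revP_mul_self (m k : ℕ) : revP m k * revP m k = 1 := by
  apply Equiv.ext; intro x
  exact revP_revP m k x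

lemma toPerm_block (n : ℕ) : ∀ d ≤ n, ∀ x : Fin (n + 1),
    ((toPerm (n + 1) ((List.range d).map (fun r => n - d + r))) x : ℕ) =
      if (x : ℕ) < n - d then (x : ℕ) else if (x : ℕ) = n then n - d else (x : ℕ) + 1 := by
  intro d
  induction d with
  | zero =>
    intro _ x
    have hx := x.isLt
    simp only [List.range_zero, List.map_nil, toPerm_nil, Equiv.Perm.one_apply]
    split_ifs <;> omega
  | succ d ih =>
    intro hd x
    have hx := x.isLt
    have hblock : (List.range (d + 1)).map (fun r => n - (d + 1) + r) =
        (n - (d + 1)) :: (List.range d).map (fun r => n - d + r) := by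
      rw [List.range_succ_eq_map, List.map_cons, List.map_map]
      refine congrArg₂ List.cons ?_ ?_
      · show n - (d + 1) + 0 = n - (d + 1)
        omega
      · apply List.map_congr_left
        intro r _
        show n - (d + 1) + Nat.succ r = n - d + r
        omega
    rw [hblock, toPerm_cons]
    have hs : n - (d + 1) + 1 < n + 1 := by omega
    rw [Equiv.Perm.mul_apply, sNat_coe hs, ih (by omega) x]
    split_ifs <;> omega

/-- The shifted omega word: `flatMap` over `t < j` of the block `[n-1-t, …, n-1]`. -/
def Wword (n j : ℕ) : List ℕ :=
  (List.range j).flatMap (fun t => (List.range (t + 1)).map (fun r => n - 1 - t + r))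

lemma Wword_succ (n j : ℕ) : Wword n (j + 1) =
    Wword n j ++ (List.range (j + 1)).map (fun r => n - 1 - j + r) := by
  rw [Wword, Wword]
  nth_rewrite 1 [List.range_succ]
  rw [List.flatMap_append]
  congr 1
  simp

lemma toPerm_Wword (n : ℕ) : ∀ j ≤ n, toPerm (n + 1) (Wword n j) = revP (n + 1) (n - j) := by
  intro j
  induction j with
  | zero =>
    intro _
    apply Equiv.ext; intro x
    apply Fin.ext
    have hx := x.isLt
    rw [show Wword n 0 = [] from rfl, toPerm_nil, revP_coe]
    simp only [Equiv.Perm.one_apply]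
    split_ifs <;> omega
  | succ j ih =>
    intro hj
    have hfb : (fun r => n - 1 - j + r) = (fun r => n - (j + 1) + r) := by
      funext r; omega
    rw [Wword_succ, toPerm_append, ih (by omega), hfb]
    apply Equiv.ext; intro x
    apply Fin.ext
    have hx := x.isLt
    rw [Equiv.Perm.mul_apply, revP_coe, toPerm_block n (j + 1) hj x, revP_coe]
    have h1 : ((toPerm (n + 1) ((List.range (j + 1)).map (fun r => n - (j + 1) + r))) x : ℕ)
        = if (x : ℕ) < n - (j + 1) then (x : ℕ) else if (x : ℕ) = n then n - (j + 1)
          else (x : ℕ) + 1 := toPerm_block n (j + 1) hj x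
    have hlt := ((toPerm (n + 1) ((List.range (j + 1)).map (fun r => n - (j + 1) + r))) x).isLt
    split_ifs at h1 ⊢ <;> omega

lemma omegaWord_mem {μ : ℕ} : ∀ x ∈ omegaWord μ, x + 1 < μ := by
  intro x hx
  rw [omegaWord] at hx
  simp only [List.mem_flatMap, List.mem_map, List.mem_range] at hx
  obtain ⟨t, ht, r, hr, rfl⟩ := hx
  omega

lemma omegaWord_shift (n j : ℕ) (hj : j ≤ n) :
    (omegaWord (j + 1)).map (fun x => x + (n - j)) = Wword n j := by
  rw [omegaWord, Wword, List.map_flatMap]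
  simp only [Nat.add_sub_cancel]
  apply List.flatMap_congr
  intro t ht
  rw [List.mem_range] at ht
  rw [List.map_map]
  apply List.map_congr_left
  intro r hr
  rw [List.mem_range] at hr
  simp only [Function.comp]
  omega

lemma bword_cons (n i : ℕ) (l : List ℕ) : bword n (i :: l) = bgen n i * bword n l := by
  simp [bword]

lemma shiftHom_bword (j n off : ℕ) (h : j + off ≤ n) (l : List ℕ) (hl : ∀ x ∈ l, x < j) :
    shiftHom j n off h (bword j l) = bword n (l.map (fun x => x + off)) := by
  induction l with
  | nil => simp [bword]
  | cons a l ih =>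
    have ha : a < j := hl a (by simp)
    rw [bword_cons, map_mul, ih (fun x hx => hl x (by simp [hx])), List.map_cons, bword_cons]
    congr 1
    rw [bgen_lt ha, shiftHom, PresentedGroup.toGroup.of, bgen_lt (by omega)]

end Chunk6

section Chunk7
open Finset

lemma mk_coe {m v : ℕ} (h : v < m) : ((⟨v, h⟩ : Fin m) : ℕ) = v := rfl

/-- Pairs `(a,b)` with `n - j ≤ a < b`. -/
def blockF (n j : ℕ) : Finset (Fin (n + 1) × Fin (n + 1)) :=
  Finset.univ.filter (fun p => n - j ≤ (p.1 : ℕ) ∧ p.1 < p.2)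

lemma mem_blockF {n j : ℕ} {p : Fin (n + 1) × Fin (n + 1)} :
    p ∈ blockF n j ↔ n - j ≤ (p.1 : ℕ) ∧ p.1 < p.2 := by simp [blockF]

lemma blockF_zero (n : ℕ) : blockF n 0 = ∅ := by
  ext p
  simp only [mem_blockF, Finset.notMem_empty, iff_false]
  rintro ⟨h1, h2⟩
  have h3 := p.1.isLt; have h4 := p.2.isLt
  rw [Fin.lt_iff_val_lt_val] at h2
  omega

lemma blockF_card (n : ℕ) : ∀ j ≤ n, (blockF n j).card = (Wword n j).length := by
  intro j
  induction j with
  | zero => intro _; simp [blockF_zero, Wword]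
  | succ j ih =>
    intro hj
    have hlt : n - (j + 1) < n + 1 := by omega
    have key : blockF n (j + 1) = blockF n j ∪ Finset.univ.filter
        (fun p : Fin (n + 1) × Fin (n + 1) => (p.1 : ℕ) = n - (j + 1) ∧ p.1 < p.2) := by
      ext p
      simp only [Finset.mem_union, mem_blockF, Finset.mem_filter, Finset.mem_univ, true_and]
      constructor
      · rintro ⟨h1, h2⟩
        rcases Nat.eq_or_lt_of_le h1 with he | hl
        · exact Or.inr ⟨he.symm, h2⟩
        · exact Or.inl ⟨by omega, h2⟩
      · rintro (⟨h1, h2⟩ | ⟨h1, h2⟩)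
        · exact ⟨by omega, h2⟩
        · exact ⟨by omega, h2⟩
    have hdisj : Disjoint (blockF n j) (Finset.univ.filter
        (fun p : Fin (n + 1) × Fin (n + 1) => (p.1 : ℕ) = n - (j + 1) ∧ p.1 < p.2)) := by
      rw [Finset.disjoint_left]
      intro p hp hq
      rw [mem_blockF] at hp
      simp only [Finset.mem_filter, Finset.mem_univ, true_and] at hq
      omega
    have hrow : (Finset.univ.filter
        (fun p : Fin (n + 1) × Fin (n + 1) => (p.1 : ℕ) = n - (j + 1) ∧ p.1 < p.2)).card
        = j + 1 := by
      have hbij : (Finset.univ.filter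
          (fun p : Fin (n + 1) × Fin (n + 1) => (p.1 : ℕ) = n - (j + 1) ∧ p.1 < p.2)).card
          = (Finset.Ioi (⟨n - (j + 1), hlt⟩ : Fin (n + 1))).card := by
        apply Finset.card_nbij' (i := fun p => p.2)
          (j := fun b => ((⟨n - (j + 1), hlt⟩ : Fin (n + 1)), b))
        · intro p hp
          simp only [Finset.mem_coe, Finset.mem_filter, Finset.mem_univ, true_and] at hp
          rw [Finset.mem_coe, Finset.mem_Ioi]
          have he : p.1 = (⟨n - (j + 1), hlt⟩ : Fin (n + 1)) := Fin.ext hp.1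
          rw [← he]; exact hp.2
        · intro b hb
          rw [Finset.mem_coe, Finset.mem_Ioi] at hb
          simp only [Finset.mem_coe, Finset.mem_filter, Finset.mem_univ, true_and]
          first
          | exact hb
          | exact ⟨mk_coe hlt, hb⟩
        · intro p hp
          simp only [Finset.mem_coe, Finset.mem_filter, Finset.mem_univ, true_and] at hp
          exact Prod.ext (Fin.ext (by rw [mk_coe]; exact hp.1.symm)) rfl
        · intro b _; rfl
      rw [hbij, Fin.card_Ioi, mk_coe]; omega
    rw [key, Finset.card_union_of_disjoint hdisj, ih (by omega), hrow, Wword_succ,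
      List.length_append, List.length_map, List.length_range]

lemma invN_stilde {n j : ℕ} (hj : j ≤ n) {π : Equiv.Perm (Fin (n + 1))}
    (hπ : StildeP n j π) :
    invN (n + 1) π = invN (n + 1) (π * revP (n + 1) (n - j)) + (blockF n j).card := by
  have hρfix : ∀ x : Fin (n + 1), (x : ℕ) < n - j → revP (n + 1) (n - j) x = x := by
    intro x hx; apply Fin.ext; rw [revP_coe, if_pos hx]
  have hdec : ∀ a b : Fin (n + 1), n - j ≤ (a : ℕ) → a < b → π b < π a := by
    intro a b ha hab
    rcases Nat.eq_or_lt_of_le ha with he | hl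
    · have haeq : a = ⟨n - j, by omega⟩ := Fin.ext he.symm
      rw [haeq, hπ.2.1]
      apply Fin.lt_last_iff_ne_last.mpr
      intro hbl
      have he2 : π b = π ⟨n - j, by omega⟩ := by rw [hbl, hπ.2.1]
      have hbeq := π.injective he2
      rw [haeq, hbeq] at hab
      exact lt_irrefl _ hab
    · exact hπ.2.2 a b hl hab
  have hσfst : ∀ p : Fin (n + 1) × Fin (n + 1), p.1 < p.2 →
      (π * revP (n + 1) (n - j)) p.2 < (π * revP (n + 1) (n - j)) p.1 → (p.1 : ℕ) < n - j := by
    intro p h12 hinv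
    by_contra hc
    push_neg at hc
    have h12' := h12
    rw [Fin.lt_iff_val_lt_val] at h12'
    have hp2 := p.2.isLt
    have hlt : (π * revP (n + 1) (n - j)) p.1 < (π * revP (n + 1) (n - j)) p.2 := by
      simp only [Equiv.Perm.mul_apply]
      by_cases h2 : (p.2 : ℕ) = n
      · have e2 : revP (n + 1) (n - j) p.2 = ⟨n - j, by omega⟩ := by
          apply Fin.ext
          simp only [revP_coe, mk_coe]
          rw [if_neg (by omega)]
          omega
        rw [e2, hπ.2.1]
        apply Fin.lt_last_iff_ne_last.mpr
        intro hl
        have he3 : π (revP (n + 1) (n - j) p.1) = π (revP (n + 1) (n - j) p.2) := by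
          rw [hl, e2, hπ.2.1]
        have := (revP (n + 1) (n - j)).injective (π.injective he3)
        rw [this] at h12
        exact lt_irrefl _ h12
      · apply hπ.2.2
        · rw [revP_coe, if_neg (by omega)]
          omega
        · rw [Fin.lt_iff_val_lt_val, revP_coe, revP_coe, if_neg (by omega), if_neg (by omega)]
          omega
    exact absurd hinv (asymm hlt)
  have hsub : blockF n j ⊆ invSet (n + 1) π := by
    intro p hp
    rw [mem_blockF] at hp
    rw [mem_invSet]
    exact ⟨hp.2, hdec p.1 p.2 hp.1 hp.2⟩
  have hcard : (invSet (n + 1) π \ blockF n j).card =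
      (invSet (n + 1) (π * revP (n + 1) (n - j))).card := by
    apply Finset.card_nbij' (i := fun q => (q.1, revP (n + 1) (n - j) q.2))
      (j := fun p => (p.1, revP (n + 1) (n - j) p.2))
    · intro q hq
      rw [Finset.mem_coe, Finset.mem_sdiff, mem_invSet, mem_blockF] at hq
      obtain ⟨⟨h12, hinvq⟩, hnb⟩ := hq
      have h12' := h12
      rw [Fin.lt_iff_val_lt_val] at h12'
      have hq1 : (q.1 : ℕ) < n - j := by
        by_contra hc
        exact hnb ⟨by omega, h12⟩
      have hq2 := q.2.isLt
      rw [Finset.mem_coe, mem_invSet]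
      dsimp only
      constructor
      · rw [Fin.lt_iff_val_lt_val, revP_coe]
        split_ifs <;> omega
      · simp only [Equiv.Perm.mul_apply]
        rw [revP_revP, hρfix q.1 hq1]
        exact hinvq
    · intro p hp
      rw [Finset.mem_coe, mem_invSet] at hp
      obtain ⟨h12, hinvp⟩ := hp
      have hp1 : (p.1 : ℕ) < n - j := hσfst p h12 hinvp
      have h12' := h12
      rw [Fin.lt_iff_val_lt_val] at h12'
      have hp2 := p.2.isLt
      rw [Finset.mem_coe, Finset.mem_sdiff, mem_invSet, mem_blockF]
      dsimp only
      rw [Equiv.Perm.mul_apply, Equiv.Perm.mul_apply, hρfix p.1 hp1] at hinvp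
      refine ⟨⟨?_, hinvp⟩, ?_⟩
      · rw [Fin.lt_iff_val_lt_val, revP_coe]
        split_ifs <;> omega
      · rintro ⟨hc, _⟩
        omega
    · intro q _; simp [revP_revP]
    · intro p _; simp [revP_revP]
  rw [invN, invN, ← Finset.card_sdiff_add_card_eq_card hsub, hcard]

lemma stilde_iff_shuf {n j : ℕ} (hj : j ≤ n) (π : Equiv.Perm (Fin (n + 1))) :
    StildeP n j π ↔ ShufEmbP n (n - j) (π * revP (n + 1) (n - j)) := by
  have hρfix : ∀ x : Fin (n + 1), (x : ℕ) < n - j → revP (n + 1) (n - j) x = x := by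
    intro x hx; apply Fin.ext; rw [revP_coe, if_pos hx]
  have hρlast : revP (n + 1) (n - j) (Fin.last n) = ⟨n - j, by omega⟩ := by
    apply Fin.ext
    simp only [revP_coe, Fin.val_last, mk_coe]
    rw [if_neg (by omega)]
    omega
  have hρnj : revP (n + 1) (n - j) ⟨n - j, by omega⟩ = Fin.last n := by
    apply Fin.ext
    simp only [revP_coe, mk_coe, Fin.val_last]
    rw [if_neg (by omega)]
    omega
  constructor
  · intro hπ
    refine ⟨?_, ?_, ?_⟩
    · rw [Equiv.Perm.mul_apply, hρlast, hπ.2.1]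
    · intro a b hab hb
      have hab' := hab
      rw [Fin.lt_iff_val_lt_val] at hab'
      rw [Equiv.Perm.mul_apply, Equiv.Perm.mul_apply, hρfix a (by omega), hρfix b hb]
      exact hπ.1 a b hab hb
    · intro a b ha hab hb
      have hab' := hab
      rw [Fin.lt_iff_val_lt_val] at hab'
      have hbb := b.isLt
      rw [Equiv.Perm.mul_apply, Equiv.Perm.mul_apply]
      apply hπ.2.2
      · rw [revP_coe, if_neg (by omega)]
        omega
      · rw [Fin.lt_iff_val_lt_val, revP_coe, revP_coe, if_neg (by omega), if_neg (by omega)]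
        omega
  · intro hσ
    have hπx : ∀ x, π x = (π * revP (n + 1) (n - j)) (revP (n + 1) (n - j) x) := by
      intro x; rw [Equiv.Perm.mul_apply, revP_revP]
    refine ⟨?_, ?_, ?_⟩
    · intro a b hab hb
      have hab' := hab
      rw [Fin.lt_iff_val_lt_val] at hab'
      rw [hπx a, hπx b, hρfix a (by omega), hρfix b hb]
      exact hσ.2.1 a b hab hb
    · rw [hπx ⟨n - j, by omega⟩, hρnj, hσ.1]
    · intro a b ha hab
      have hab' := hab
      rw [Fin.lt_iff_val_lt_val] at hab'
      have hbb := b.isLt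
      rw [hπx a, hπx b]
      apply hσ.2.2
      · rw [revP_coe, if_neg (by omega)]
        omega
      · rw [Fin.lt_iff_val_lt_val, revP_coe, revP_coe, if_neg (by omega), if_neg (by omega)]
        omega
      · rw [revP_coe, if_neg (by omega)]
        omega

lemma stildeP_revP {n j : ℕ} (hj : j ≤ n) : StildeP n j (revP (n + 1) (n - j)) := by
  refine ⟨?_, ?_, ?_⟩
  · intro a b hab hb
    have hab' := hab
    rw [Fin.lt_iff_val_lt_val] at hab' ⊢
    rw [revP_coe, revP_coe, if_pos (by omega), if_pos hb]
    exact hab'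
  · apply Fin.ext
    rw [revP_coe, mk_coe, if_neg (by omega), Fin.val_last]
    omega
  · intro a b ha hab
    have hab' := hab
    rw [Fin.lt_iff_val_lt_val] at hab' ⊢
    have hbb := b.isLt
    rw [revP_coe, revP_coe, if_neg (by omega), if_neg (by omega)]
    omega

lemma key_term {𝕜 : Type*} [Field 𝕜] {n j : ℕ} (hj : j ≤ n)
    {π : Equiv.Perm (Fin (n + 1))} (hπ : StildeP n j π) :
    cOf 𝕜 n π⁻¹ =
      MonoidAlgebra.of 𝕜 (Braid n)
        (shiftHom j n (n - j) (Nat.add_sub_of_le hj).le (bword j (omegaWord (j + 1)))) *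
      cOf 𝕜 n (π * revP (n + 1) (n - j))⁻¹ := by
  have hW : toPerm (n + 1) (Wword n j) = revP (n + 1) (n - j) := toPerm_Wword n j hj
  have hNρ : invN (n + 1) (revP (n + 1) (n - j)) = (blockF n j).card := by
    have h0 := invN_stilde hj (stildeP_revP hj)
    rw [revP_mul_self, invN_one, zero_add] at h0
    exact h0
  have hlenW : (Wword n j).length = (blockF n j).card := (blockF_card n j hj).symm
  have hρred : IsReduced (n + 1) (Wword n j) (revP (n + 1) (n - j)) :=
    isReduced_iff.mpr ⟨hW, by rw [hlenW, hNρ]⟩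
  have hshift : shiftHom j n (n - j) (Nat.add_sub_of_le hj).le (bword j (omegaWord (j + 1))) =
      bword n (Wword n j) := by
    rw [shiftHom_bword j n (n - j) (by omega) _
      (fun x hx => by have := omegaWord_mem x hx; omega), omegaWord_shift n j hj]
  have hfact : π⁻¹ = revP (n + 1) (n - j) * (π * revP (n + 1) (n - j))⁻¹ := by
    rw [mul_inv_rev, ← mul_assoc]
    have : revP (n + 1) (n - j) * (revP (n + 1) (n - j))⁻¹ = 1 := mul_inv_cancel _
    rw [this, one_mul]
  have hadd : invN (n + 1) (revP (n + 1) (n - j) * (π * revP (n + 1) (n - j))⁻¹) =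
      invN (n + 1) (revP (n + 1) (n - j)) + invN (n + 1) ((π * revP (n + 1) (n - j))⁻¹) := by
    rw [← hfact, invN_inv, invN_inv, invN_stilde hj hπ, hNρ]
    omega
  have hm : mats n π⁻¹ = bword n (Wword n j) * mats n ((π * revP (n + 1) (n - j))⁻¹) := by
    rw [hfact, mats_mul hadd, mats_eq hρred]
  rw [cOf, cOf, hm, map_mul, hshift]

end Chunk7

/-- In `k[B_{n+1}]`, for `0 ≤ j ≤ n`:
`g_{n,j} = shift_{n−j}(ω_{j+1}) · S_{n−j,j}`, where `shift_{n−j} : k[B_{j+1}] → k[B_{n+1}]`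
is induced by `c_i ↦ c_{i+n−j}`, `ω_{j+1}` is the longest-word lift, and `S_{n−j,j}` is
the sum of the Matsumoto lifts `c_{σ⁻¹}` over the `(n−j)`-shuffles `σ` of `S_n`. -/
theorem gEl_eq_omega_mul_shuffles (𝕜 : Type*) [Field 𝕜] (n j : ℕ) (hn : 1 ≤ n)
    (hj : j ≤ n) :
    gEl 𝕜 n j =
      MonoidAlgebra.of 𝕜 (Braid n)
          (shiftHom j n (n - j) (by omega) (bword j (omegaWord (j + 1)))) *
        shufSumEmb 𝕜 n (n - j) := by
  classical
  have hmain : ∑ π : Equiv.Perm (Fin (n + 1)), (if StildeP n j π then cOf 𝕜 n π⁻¹ else 0) =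
      ∑ σ : Equiv.Perm (Fin (n + 1)), (if ShufEmbP n (n - j) σ then
        MonoidAlgebra.of 𝕜 (Braid n)
          (shiftHom j n (n - j) (by omega) (bword j (omegaWord (j + 1)))) *
        cOf 𝕜 n σ⁻¹ else 0) := by
    apply Fintype.sum_equiv (Equiv.mulRight (revP (n + 1) (n - j)))
    intro π
    simp only [Equiv.coe_mulRight]
    by_cases hS : StildeP n j π
    · rw [if_pos hS]
      exact (key_term hj hS).trans (if_pos ((stilde_iff_shuf hj π).mp hS)).symm
    · rw [if_neg hS]
      exact (if_neg (fun hc => hS ((stilde_iff_shuf hj π).mpr hc))).symm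
  rw [gEl, if_pos hj, hmain, shufSumEmb, Finset.mul_sum]
  apply Finset.sum_congr rfl
  intro σ _
  split_ifs with h
  · rfl
  · rw [mul_zero]

end Stmt
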